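/- Let 0 < α < 1 and 0 < τ < 1, let x ∈ ℝ and t > √τ·|x|. For q > 0 set g₊(q) = √( (1 + τ·q^α·e^{iαπ}) / (1 + q^α·e^{iαπ}) ) and g₋(q) = √( (1 + τ·q^α·e^{−iαπ}) / (1 + q^α·e^{−iαπ}) ). Then the function q ↦ ( g₊(q)·e^{|x|·q·g₊(q)} − g₋(q)·e^{|x|·q·g₋(q)} ) · e^{−qt}/q is (absolutely) integrable on (0, ∞). -/

import Mathlib

open Real Complex MeasureTheory

private lemma aux_exp_sub_one (z : ℂ) :
    ‖Complex.exp z - 1‖ ≤ 2 * ‖z‖ * Real.exp (‖z‖) := by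
  rcases le_or_gt (‖z‖) 1 with h | h
  · have h1 := Complex.norm_exp_sub_one_le h
    have h2 : (1:ℝ) ≤ Real.exp (‖z‖) := Real.one_le_exp (norm_nonneg z)
    nlinarith [norm_nonneg z]
  · have h1 : ‖Complex.exp z - 1‖ ≤ ‖Complex.exp z‖ + 1 := by
      calc ‖Complex.exp z - 1‖ = ‖Complex.exp z + (-1)‖ := by ring_nf
      _ ≤ ‖Complex.exp z‖ + ‖-1‖ :=
        by simpa using norm_add_le (Complex.exp z) (-1)
      _ = ‖Complex.exp z‖ + 1 := by simp
    have h2 : ‖Complex.exp z‖ = Real.exp z.re := Complex.norm_exp z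
    have h3 : z.re ≤ ‖z‖ := Complex.re_le_norm z
    have h4 : Real.exp z.re ≤ Real.exp (‖z‖) := Real.exp_le_exp.mpr h3
    have h5 : (1:ℝ) ≤ Real.exp (‖z‖) := Real.one_le_exp (norm_nonneg z)
    nlinarith

private lemma aux_D_im_le (r : ℝ) (e : ℂ) (he : ‖e‖ = 1) :
    |e.im| ≤ ‖1 + (r : ℂ) * e‖ := by
  have h1 : e.re ^ 2 + e.im ^ 2 = 1 := by
    have h := Complex.sq_norm e
    rw [he, Complex.normSq_apply] at h
    nlinarith
  have h2 : ‖1 + (r:ℂ) * e‖ ^ 2 = (1 + r * e.re)^2 + (r * e.im)^2 := by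
    rw [Complex.sq_norm, Complex.normSq_apply]
    simp [Complex.add_re, Complex.add_im, Complex.mul_re, Complex.mul_im]
    ring
  have h3 : |e.im|^2 ≤ ‖1 + (r:ℂ) * e‖ ^ 2 := by
    rw [_root_.sq_abs, h2]; nlinarith [sq_nonneg (r + e.re)]
  have h4 := norm_nonneg (1 + (r:ℂ)*e)
  nlinarith [abs_nonneg e.im]

private lemma aux_sqrt_add (a b : ℝ) (ha : 0 ≤ a) (hb : 0 ≤ b) :
    Real.sqrt (a + b) ≤ Real.sqrt a + Real.sqrt b := by
  rw [show Real.sqrt a + Real.sqrt b = Real.sqrt ((Real.sqrt a + Real.sqrt b)^2) from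
    (Real.sqrt_sq (by positivity)).symm]
  apply Real.sqrt_le_sqrt
  nlinarith [Real.sq_sqrt ha, Real.sq_sqrt hb, Real.sqrt_nonneg a, Real.sqrt_nonneg b]

private lemma aux_abs_sub (a b : ℂ) : ‖a - b‖ ≤ ‖a‖ + ‖b‖ := by
  simpa [sub_eq_add_neg] using norm_add_le a (-b)

/-- Facts about `W = (1+τ r E)/(1+r E)` for `E` on the unit circle with `E.im = s > 0`. -/
private lemma aux_W (τ rr s co : ℝ) (hτ0 : 0 < τ) (hτ1 : τ < 1) (hrr : 0 < rr) (hs : 0 < s)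
    (E : ℂ) (hEre : E.re = co) (hEim : E.im = s) (hEabs : ‖E‖ = 1)
    (hco : -1 ≤ co) :
    (1 + (rr:ℂ) * E) ≠ 0 ∧
    ((1 + (τ:ℂ) * (rr:ℂ) * E) / (1 + (rr:ℂ) * E)).im < 0 ∧
    ‖(1 + (τ:ℂ) * (rr:ℂ) * E) / (1 + (rr:ℂ) * E)‖ ≤ τ + (1-τ)/s ∧
    ‖(1 + (τ:ℂ) * (rr:ℂ) * E) / (1 + (rr:ℂ) * E)‖ ≤ τ + (1-τ)/(rr*s) ∧
    |(((1 + (τ:ℂ) * (rr:ℂ) * E) / (1 + (rr:ℂ) * E)).im)| ≤ rr * (1-τ)/s ∧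
    (rr ≤ 1 → τ ≤ ((1 + (τ:ℂ) * (rr:ℂ) * E) / (1 + (rr:ℂ) * E)).re) := by
  set D : ℂ := 1 + (rr:ℂ) * E with hD
  set N : ℂ := 1 + (τ:ℂ) * (rr:ℂ) * E with hN
  have hDre : D.re = 1 + rr * co := by
    rw [hD]; simp [Complex.add_re, Complex.mul_re, hEre, hEim]
  have hDim : D.im = rr * s := by
    rw [hD]; simp [Complex.add_im, Complex.mul_im, hEre, hEim]
  have hNre : N.re = 1 + τ * rr * co := by
    rw [hN]; simp [Complex.add_re, Complex.mul_re, Complex.mul_im, hEre, hEim]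
  have hNim : N.im = τ * rr * s := by
    rw [hN]; simp [Complex.add_im, Complex.mul_re, Complex.mul_im, hEre, hEim]
  have hsD : s ≤ ‖D‖ := by
    have := aux_D_im_le rr E hEabs
    rwa [hEim, abs_of_pos hs] at this
  have hrsD : rr * s ≤ ‖D‖ := by
    have h := Complex.abs_im_le_norm D
    rw [hDim] at h
    calc rr * s = |rr * s| := (abs_of_pos (by positivity)).symm
    _ ≤ _ := h
  have hDne : D ≠ 0 := by
    intro h
    rw [h] at hsD; simp at hsD; linarith
  have hnsq : 0 < Complex.normSq D := Complex.normSq_pos.mpr hDne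
  have hnsq_eq : Complex.normSq D = (1 + rr*co)^2 + (rr*s)^2 := by
    rw [Complex.normSq_apply, hDre, hDim]; ring
  have hs2nsq : s^2 ≤ Complex.normSq D := by
    have := Complex.sq_norm D
    nlinarith
  have hWim : (N / D).im = rr * s * (τ - 1) / Complex.normSq D := by
    rw [Complex.div_im, hNim, hNre, hDre, hDim]
    field_simp
    ring
  have hWim_neg : (N / D).im < 0 := by
    rw [hWim]
    apply div_neg_of_neg_of_pos _ hnsq
    have h1 : 0 < rr * s := by positivity
    nlinarith [mul_pos h1 (by linarith : (0:ℝ) < 1 - τ)]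
  have hWim_abs : |(N / D).im| ≤ rr * (1-τ)/s := by
    rw [hWim, abs_div, abs_of_pos hnsq]
    rw [div_le_div_iff₀ hnsq (by positivity)]
    have : |rr * s * (τ - 1)| = rr * s * (1 - τ) := by
      rw [abs_of_nonpos (by nlinarith [mul_pos (mul_pos hrr hs) (by linarith : (0:ℝ) < 1 - τ)])]
      ring
    rw [this]
    nlinarith [mul_le_mul_of_nonneg_left hs2nsq (mul_nonneg hrr.le (by linarith : (0:ℝ) ≤ 1-τ))]
  have hWeq : N / D = (τ:ℂ) + ((1-τ:ℝ):ℂ) / D := by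
    rw [div_eq_iff hDne, add_mul, div_mul_cancel₀ _ hDne, hN, hD]; push_cast; ring
  have hWabs : ∀ b : ℝ, 0 < b → b ≤ ‖D‖ →
      ‖N / D‖ ≤ τ + (1-τ)/b := by
    intro b hb hbD
    rw [hWeq]
    calc ‖(τ:ℂ) + ((1-τ:ℝ):ℂ) / D‖
        ≤ ‖(τ:ℂ)‖ + ‖((1-τ:ℝ):ℂ) / D‖ := norm_add_le _ _
    _ = τ + (1-τ) / ‖D‖ := by
        rw [norm_div, Complex.norm_real, Real.norm_eq_abs, Complex.norm_real, Real.norm_eq_abs,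
          abs_of_pos hτ0, abs_of_pos (by linarith)]
    _ ≤ τ + (1-τ)/b := by
        gcongr
  have hWre : rr ≤ 1 → τ ≤ (N / D).re := by
    intro hrr1
    rw [Complex.div_re, hNim, hNre, hDre, hDim]
    rw [← add_div, le_div_iff₀ hnsq, hnsq_eq]
    have h1rc : 0 ≤ 1 + rr * co := by nlinarith
    nlinarith [mul_nonneg (by linarith : (0:ℝ) ≤ 1 - τ) h1rc]
  exact ⟨hDne, hWim_neg, hWabs s hs hsD, hWabs (rr*s) (by positivity) hrsD, hWim_abs, hWre⟩

private lemma aux_sq_cpow_half (W : ℂ) : (W ^ (1/2:ℂ)) * (W ^ (1/2:ℂ)) = W := by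
  have hπ := Real.pi_pos
  have h1 : ((Complex.log W) * (1/2:ℂ)).im = (Complex.log W).im * (1/2) := by
    simp [Complex.mul_im]
  have harg1 := Complex.neg_pi_lt_arg W
  have harg2 := Complex.arg_le_pi W
  have hl : (Complex.log W).im = Complex.arg W := Complex.log_im W
  have h2 : (W ^ ((1/2:ℂ) * 2)) = (W ^ (1/2:ℂ)) ^ (2:ℂ) := by
    apply Complex.cpow_mul
    · rw [h1, hl]; linarith
    · rw [h1, hl]; linarith
  have h3 : (W ^ (1/2:ℂ)) ^ (2:ℂ) = (W ^ (1/2:ℂ)) ^ (2:ℕ) := by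
    rw [show ((2:ℂ)) = ((2:ℕ):ℂ) by norm_num, Complex.cpow_natCast]
  have h5 : W ^ ((1/2:ℂ) * 2) = W := by norm_num
  calc (W ^ (1/2:ℂ)) * (W ^ (1/2:ℂ)) = (W ^ (1/2:ℂ)) ^ (2:ℕ) := by ring
  _ = (W ^ (1/2:ℂ)) ^ (2:ℂ) := h3.symm
  _ = W := by rw [← h2, h5]

private lemma aux_abs_cpow_half (W : ℂ) :
    ‖W ^ (1/2:ℂ)‖ = Real.sqrt (‖W‖) := by
  rw [show (1/2:ℂ) = ((1/2:ℝ):ℂ) by norm_num, Complex.norm_cpow_real,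
    Real.sqrt_eq_rpow]

/-- If `τ ≤ W.re` and `|W.im| ≤ A` then `|√W - conj √W| ≤ A/√τ`. -/
private lemma aux_diff_bound (τ A : ℝ) (hτ0 : 0 < τ) (W : ℂ)
    (hWre : τ ≤ W.re) (hWim : |W.im| ≤ A) :
    ‖W ^ (1/2:ℂ) - (starRingEnd ℂ) (W ^ (1/2:ℂ))‖ ≤ A / Real.sqrt τ := by
  set u : ℂ := W ^ (1/2:ℂ) with hu
  have hsq : u * u = W := aux_sq_cpow_half W
  have hre : u.re * u.re - u.im * u.im = W.re := by
    rw [← Complex.mul_re, hsq]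
  have him : u.re * u.im + u.im * u.re = W.im := by
    rw [← Complex.mul_im, hsq]
  have hre2 : τ ≤ u.re^2 := by nlinarith [sq_nonneg u.im]
  have hsqrt : Real.sqrt τ ≤ |u.re| := by
    rw [← Real.sqrt_sq_eq_abs]
    exact Real.sqrt_le_sqrt hre2
  have hst : 0 < Real.sqrt τ := Real.sqrt_pos.mpr hτ0
  have hsub : u - (starRingEnd ℂ) u = (2 * u.im : ℝ) * Complex.I := by
    rw [Complex.sub_conj]
  have habs : ‖u - (starRingEnd ℂ) u‖ = 2 * |u.im| := by
    rw [hsub, norm_mul, Complex.norm_real, Real.norm_eq_abs, Complex.norm_I, mul_one, abs_mul, _root_.abs_two]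
  rw [habs, le_div_iff₀ hst]
  have key : 2 * |u.im| * |u.re| ≤ A := by
    have h6 : 2 * |u.im| * |u.re| = |W.im| := by
      rw [← him]
      rw [show u.re * u.im + u.im * u.re = 2 * (u.im * u.re) by ring]
      rw [abs_mul, abs_mul, _root_.abs_two]
      ring
    linarith [hWim]
  calc 2 * |u.im| * Real.sqrt τ ≤ 2 * |u.im| * |u.re| := by
        apply mul_le_mul_of_nonneg_left hsqrt (by positivity)
  _ ≤ A := key

private lemma aux_exponent (a δ K : ℝ) (ha0 : 0 < a) (ha1 : a < 1) (hδ : 0 < δ)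
    (hK : 0 ≤ K) (q : ℝ) (hq : 1 ≤ q) :
    -δ*q + K*q^(1-a/2) ≤ -(δ/2)*q + K * (max 1 ((2*K/δ)^((2:ℝ)/a))) := by
  set Q0 : ℝ := max 1 ((2*K/δ)^((2:ℝ)/a)) with hQ0
  have hQ01 : (1:ℝ) ≤ Q0 := le_max_left _ _
  have hq0 : (0:ℝ) < q := lt_of_lt_of_le one_pos hq
  rcases le_or_gt q Q0 with h | h
  · have h1 : q^(1-a/2) ≤ q := by
      calc q^(1-a/2) ≤ q^(1:ℝ) := Real.rpow_le_rpow_of_exponent_le hq (by linarith)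
      _ = q := Real.rpow_one q
    have h2 : K*q^(1-a/2) ≤ K*Q0 := by
      calc K*q^(1-a/2) ≤ K*q := mul_le_mul_of_nonneg_left h1 hK
      _ ≤ K*Q0 := mul_le_mul_of_nonneg_left h hK
    nlinarith
  · have hX : (0:ℝ) ≤ 2*K/δ := by positivity
    have h2 : 2*K/δ ≤ q^(a/2) := by
      have hQ : (2*K/δ)^((2:ℝ)/a) ≤ q := le_of_lt (lt_of_le_of_lt (le_max_right _ _) h)
      have ha' : a ≠ 0 := ne_of_gt ha0
      calc 2*K/δ = (2*K/δ) ^ ((2:ℝ)/a * (a/2)) := by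
            rw [show (2:ℝ)/a*(a/2) = 1 by field_simp, Real.rpow_one]
      _ = ((2*K/δ)^((2:ℝ)/a))^(a/2) := Real.rpow_mul hX _ _
      _ ≤ q^(a/2) := Real.rpow_le_rpow (Real.rpow_nonneg hX _) hQ (by positivity)
    have h3 : K ≤ δ/2 * q^(a/2) := by
      rw [div_le_iff₀ hδ] at h2
      linarith
    have hA : (0:ℝ) ≤ q^(1-a/2) := Real.rpow_nonneg hq0.le _
    have h4 : K * q^(1-a/2) ≤ δ/2 * (q^(a/2) * q^(1-a/2)) := by
      have := mul_le_mul_of_nonneg_right h3 hA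
      calc K * q^(1-a/2) ≤ δ/2 * q^(a/2) * q^(1-a/2) := this
      _ = δ/2 * (q^(a/2) * q^(1-a/2)) := by ring
    have h5 : q^(a/2) * q^(1-a/2) = q := by
      rw [← Real.rpow_add hq0]
      norm_num
    rw [h5] at h4
    have hB : 0 ≤ K * Q0 := mul_nonneg hK (by linarith)
    nlinarith

set_option maxHeartbeats 2000000 in
/-- For `0 < α < 1`, `0 < τ < 1`, `x ∈ ℝ` and `t > √τ·|x|`, with
`g₊(q) = √((1 + τ q^α e^{iαπ})/(1 + q^α e^{iαπ}))` and
`g₋(q) = √((1 + τ q^α e^{−iαπ})/(1 + q^α e^{−iαπ}))` (`q^α` the real power,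
`√` the principal complex square root), the integrand of the fundamental
solution formula, `q ↦ (g₊(q)·e^{|x| q g₊(q)} − g₋(q)·e^{|x| q g₋(q)})·e^{−qt}/q`,
is integrable on `(0, ∞)`. -/
theorem fund_sol_integrand_integrable
    (α τ : ℝ) (hα0 : 0 < α) (hα1 : α < 1) (hτ0 : 0 < τ) (hτ1 : τ < 1)
    (x t : ℝ) (ht : Real.sqrt τ * |x| < t)
    (gp gm : ℝ → ℂ)
    (hgp : ∀ q : ℝ, gp q =
      ((1 + (τ : ℂ) * ((q ^ α : ℝ) : ℂ) * Complex.exp (Complex.I * (α * Real.pi : ℝ))) /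
        (1 + ((q ^ α : ℝ) : ℂ) * Complex.exp (Complex.I * (α * Real.pi : ℝ)))) ^ (1/2 : ℂ))
    (hgm : ∀ q : ℝ, gm q =
      ((1 + (τ : ℂ) * ((q ^ α : ℝ) : ℂ) * Complex.exp (-(Complex.I * (α * Real.pi : ℝ)))) /
        (1 + ((q ^ α : ℝ) : ℂ) * Complex.exp (-(Complex.I * (α * Real.pi : ℝ))))) ^ (1/2 : ℂ)) :
    IntegrableOn
      (fun q : ℝ =>
        (gp q * Complex.exp (((|x| : ℝ) : ℂ) * (q : ℂ) * gp q)
          - gm q * Complex.exp (((|x| : ℝ) : ℂ) * (q : ℂ) * gm q))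
          * Complex.exp (-(q : ℂ) * (t : ℂ)) / (q : ℂ))
      (Set.Ioi 0) := by
  set F : ℝ → ℂ := (fun q : ℝ =>
        (gp q * Complex.exp (((|x| : ℝ) : ℂ) * (q : ℂ) * gp q)
          - gm q * Complex.exp (((|x| : ℝ) : ℂ) * (q : ℂ) * gm q))
          * Complex.exp (-(q : ℂ) * (t : ℂ)) / (q : ℂ)) with hFdef
  have hπ := Real.pi_pos
  set θ : ℝ := α * Real.pi with hθdef
  have hθ0 : 0 < θ := by positivity
  have hθπ : θ < Real.pi := by rw [hθdef]; nlinarith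
  set s : ℝ := Real.sin θ with hsdef
  have hs : 0 < s := Real.sin_pos_of_pos_of_lt_pi hθ0 hθπ
  set E : ℂ := Complex.exp (Complex.I * (θ:ℝ)) with hEdef
  set Em : ℂ := Complex.exp (-(Complex.I * (θ:ℝ))) with hEmdef
  have hEcomm : Complex.I * (θ:ℂ) = (θ:ℂ) * Complex.I := mul_comm _ _
  have hEre : E.re = Real.cos θ := by
    rw [hEdef, hEcomm, Complex.exp_ofReal_mul_I_re]
  have hEim : E.im = s := by
    rw [hEdef, hEcomm, Complex.exp_ofReal_mul_I_im, hsdef]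
  have hEabs : ‖E‖ = 1 := by
    rw [hEdef, Complex.norm_exp]; simp
  have hEm : Em = (starRingEnd ℂ) E := by
    rw [hEmdef, hEdef, ← Complex.exp_conj]
    congr 1
    simp [Complex.conj_I]
  have ht0 : 0 < t := lt_of_le_of_lt (by positivity) ht
  set δ : ℝ := t - Real.sqrt τ * |x| with hδdef
  have hδ0 : 0 < δ := by rw [hδdef]; linarith
  set M : ℝ := Real.sqrt (τ + (1-τ)/s) with hMdef
  have hM0 : 0 ≤ M := Real.sqrt_nonneg _
  set K0 : ℝ := Real.sqrt ((1-τ)/s) with hK0def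
  have hK00 : 0 ≤ K0 := Real.sqrt_nonneg _
  set K : ℝ := |x| * K0 with hKdef
  have hK0 : 0 ≤ K := mul_nonneg (abs_nonneg x) hK00
  set B : ℝ := K * (max 1 ((2*K/δ)^((2:ℝ)/α))) with hBdef
  set C1 : ℝ := (1-τ)/(s * Real.sqrt τ) with hC1def
  have hC1nn : 0 ≤ C1 := by
    rw [hC1def]
    apply div_nonneg (by linarith) (by positivity)
  set X : ℝ := |x| * M with hXdef
  set L : ℝ := |x| * C1 with hLdef
  set C2 : ℝ := C1 * Real.exp X + M * (Real.exp X * (2 * (|x| * C1) * Real.exp L))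
    with hC2def
  -- the packaged pointwise facts
  have pack : ∀ q : ℝ, 0 < q →
      (1 + ((q^α : ℝ):ℂ) * E) ≠ 0 ∧
      (1 + ((q^α : ℝ):ℂ) * Em) ≠ 0 ∧
      ((1 + (τ:ℂ) * ((q^α : ℝ):ℂ) * E) / (1 + ((q^α : ℝ):ℂ) * E)).im < 0 ∧
      0 < ((1 + (τ:ℂ) * ((q^α : ℝ):ℂ) * Em) / (1 + ((q^α : ℝ):ℂ) * Em)).im ∧
      gm q = (starRingEnd ℂ) (gp q) ∧
      ‖gp q‖ ≤ M ∧
      ‖gp q‖ ≤ Real.sqrt τ + K0 * q^(-(α/2)) ∧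
      (q ≤ 1 → ‖gp q - gm q‖ ≤ C1 * q^α) := by
    intro q hq
    have hrr : 0 < q^α := Real.rpow_pos_of_pos hq α
    obtain ⟨hDne, hWim, hWabs1, hWabs2, hWimabs, hWre⟩ :=
      aux_W τ (q^α) s (Real.cos θ) hτ0 hτ1 hrr hs E hEre hEim hEabs (Real.neg_one_le_cos θ)
    have hDmc : (1 + ((q^α : ℝ):ℂ) * Em) = (starRingEnd ℂ) (1 + ((q^α : ℝ):ℂ) * E) := by
      simp [hEm]
    have hNmc : (1 + (τ:ℂ) * ((q^α : ℝ):ℂ) * Em)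
        = (starRingEnd ℂ) (1 + (τ:ℂ) * ((q^α : ℝ):ℂ) * E) := by
      simp [hEm]
    have hDmne : (1 + ((q^α : ℝ):ℂ) * Em) ≠ 0 := by
      rw [hDmc]
      intro h
      apply hDne
      have := congrArg (starRingEnd ℂ) h
      simpa using this
    have hWmc : (1 + (τ:ℂ) * ((q^α : ℝ):ℂ) * Em) / (1 + ((q^α : ℝ):ℂ) * Em)
        = (starRingEnd ℂ) ((1 + (τ:ℂ) * ((q^α : ℝ):ℂ) * E) / (1 + ((q^α : ℝ):ℂ) * E)) := by
      rw [hDmc, hNmc, ← map_div₀]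
    have hWmim : 0 < ((1 + (τ:ℂ) * ((q^α : ℝ):ℂ) * Em) / (1 + ((q^α : ℝ):ℂ) * Em)).im := by
      rw [hWmc, Complex.conj_im]
      linarith
    have hargne : ((1 + (τ:ℂ) * ((q^α : ℝ):ℂ) * E) / (1 + ((q^α : ℝ):ℂ) * E)).arg
        ≠ Real.pi := by
      intro h
      have h2 := (Complex.arg_eq_pi_iff.mp h).2
      linarith
    have hconj : gm q = (starRingEnd ℂ) (gp q) := by
      rw [hgp q, hgm q, hWmc, Complex.conj_cpow _ _ hargne]
      rw [show (starRingEnd ℂ) (1/2 : ℂ) = (1/2 : ℂ) by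
        rw [one_div, map_inv₀, map_ofNat]]
    have habs : ‖gp q‖
        = Real.sqrt (‖(1 + (τ:ℂ) * ((q^α : ℝ):ℂ) * E) / (1 + ((q^α : ℝ):ℂ) * E)‖) := by
      rw [hgp q, aux_abs_cpow_half]
    have habsM : ‖gp q‖ ≤ M := by
      rw [habs, hMdef]
      exact Real.sqrt_le_sqrt hWabs1
    have habstail : ‖gp q‖ ≤ Real.sqrt τ + K0 * q^(-(α/2)) := by
      rw [habs]
      calc Real.sqrt (‖_‖) ≤ Real.sqrt (τ + (1-τ)/(q^α*s)) :=
            Real.sqrt_le_sqrt hWabs2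
      _ ≤ Real.sqrt τ + Real.sqrt ((1-τ)/(q^α*s)) :=
            aux_sqrt_add _ _ hτ0.le (div_nonneg (by linarith) (by positivity))
      _ = Real.sqrt τ + K0 * q^(-(α/2)) := by
            congr 1
            rw [show (1-τ)/(q^α*s) = ((1-τ)/s) * (q^α)⁻¹ by
              rw [mul_comm (q^α) s, ← div_div, div_eq_mul_inv]]
            rw [Real.sqrt_mul (div_nonneg (by linarith) hs.le)]
            rw [hK0def]
            congr 1
            rw [show ((q^α)⁻¹ : ℝ) = q^(-α) from (Real.rpow_neg hq.le α).symm,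
              Real.sqrt_eq_rpow, ← Real.rpow_mul hq.le]
            congr 1
            ring
      _ = _ := rfl
    have hdiff : q ≤ 1 → ‖gp q - gm q‖ ≤ C1 * q^α := by
      intro hq1
      have hrr1 : q^α ≤ 1 := Real.rpow_le_one hq.le hq1 hα0.le
      have hd := aux_diff_bound τ (q^α*(1-τ)/s) hτ0 _ (hWre hrr1) hWimabs
      rw [hconj, hgp q]
      calc ‖_‖ ≤ (q^α*(1-τ)/s) / Real.sqrt τ := hd
      _ = C1 * q^α := by
          rw [hC1def]
          field_simp
    exact ⟨hDne, hDmne, hWim, hWmim, hconj, habsM, habstail, hdiff⟩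
  -- auxiliary computations
  have habs_expt : ∀ q : ℝ, ‖Complex.exp (-(q:ℂ) * (t:ℂ))‖ = Real.exp (-(q*t)) := by
    intro q
    rw [show (-(q:ℂ) * (t:ℂ)) = ((-(q*t) : ℝ) : ℂ) by push_cast; ring, Complex.norm_exp,
      Complex.ofReal_re]
  have hare : ∀ (q : ℝ) (u : ℂ), 0 ≤ q →
      ((((|x| : ℝ) : ℂ) * (q : ℂ) * u)).re ≤ |x| * q * ‖u‖ := by
    intro q u hq
    rw [show (((|x| : ℝ) : ℂ) * (q : ℂ) * u) = (((|x| * q : ℝ)) : ℂ) * u by push_cast; ring,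
      Complex.re_ofReal_mul]
    exact mul_le_mul_of_nonneg_left (Complex.re_le_norm u) (by positivity)
  -- the bound near 0
  have bound1 : ∀ q ∈ Set.Ioc (0:ℝ) 1, ‖F q‖ ≤ C2 * q^(α-1) := by
    intro q hqm
    obtain ⟨hq0, hq1⟩ := hqm
    obtain ⟨hD, hDm, hWimlt, hWmim, hconj, habsM, habstail, hdiff⟩ := pack q hq0
    have hrα0 : (0:ℝ) ≤ q^α := (Real.rpow_pos_of_pos hq0 α).le
    have hrα1 : q^α ≤ 1 := Real.rpow_le_one hq0.le hq1 hα0.le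
    have habsMv : ‖gm q‖ ≤ M := by rw [hconj, Complex.norm_conj]; exact habsM
    have hd := hdiff hq1
    have hexpa : ‖Complex.exp (((|x| : ℝ) : ℂ) * (q : ℂ) * gp q)‖ ≤ Real.exp X := by
      rw [Complex.norm_exp]
      apply Real.exp_le_exp.mpr
      calc ((((|x| : ℝ) : ℂ) * (q : ℂ) * gp q)).re ≤ |x| * q * ‖gp q‖ :=
            hare q _ hq0.le
      _ ≤ X := by
          rw [hXdef]
          calc |x| * q * ‖gp q‖ ≤ |x| * 1 * ‖gp q‖ :=
                mul_le_mul_of_nonneg_right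
                  (mul_le_mul_of_nonneg_left hq1 (abs_nonneg x)) (norm_nonneg _)
          _ = |x| * ‖gp q‖ := by ring
          _ ≤ |x| * M := mul_le_mul_of_nonneg_left habsM (abs_nonneg x)
    have hexpb : ‖Complex.exp (((|x| : ℝ) : ℂ) * (q : ℂ) * gm q)‖ ≤ Real.exp X := by
      rw [Complex.norm_exp]
      apply Real.exp_le_exp.mpr
      calc ((((|x| : ℝ) : ℂ) * (q : ℂ) * gm q)).re ≤ |x| * q * ‖gm q‖ :=
            hare q _ hq0.le
      _ ≤ X := by
          rw [hXdef]
          calc |x| * q * ‖gm q‖ ≤ |x| * 1 * ‖gm q‖ :=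
                mul_le_mul_of_nonneg_right
                  (mul_le_mul_of_nonneg_left hq1 (abs_nonneg x)) (norm_nonneg _)
          _ = |x| * ‖gm q‖ := by ring
          _ ≤ |x| * M := mul_le_mul_of_nonneg_left habsMv (abs_nonneg x)
    have habd : ‖(((|x| : ℝ) : ℂ) * (q : ℂ) * gp q) - (((|x| : ℝ) : ℂ) * (q : ℂ) * gm q)‖
        ≤ |x| * C1 * q^α := by
      rw [show (((|x| : ℝ) : ℂ) * (q : ℂ) * gp q) - (((|x| : ℝ) : ℂ) * (q : ℂ) * gm q)
          = (((|x| * q : ℝ)) : ℂ) * (gp q - gm q) by push_cast; ring,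
        norm_mul, Complex.norm_real, Real.norm_eq_abs, _root_.abs_of_nonneg (by positivity : (0:ℝ) ≤ |x| * q)]
      calc |x| * q * ‖gp q - gm q‖ ≤ (|x| * 1) * (C1 * q^α) := by
            apply mul_le_mul (by nlinarith [abs_nonneg x]) hd (norm_nonneg _) (by positivity)
      _ = |x| * C1 * q^α := by ring
    have habd2 : ‖(((|x| : ℝ) : ℂ) * (q : ℂ) * gp q) - (((|x| : ℝ) : ℂ) * (q : ℂ) * gm q)‖
        ≤ L := by
      rw [hLdef]
      calc ‖_‖ ≤ |x| * C1 * q^α := habd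
      _ ≤ |x| * C1 * 1 := by
          have h0 : 0 ≤ |x| * C1 := mul_nonneg (abs_nonneg x) hC1nn
          nlinarith
      _ = |x| * C1 := by ring
    have hediff : ‖Complex.exp (((|x| : ℝ) : ℂ) * (q : ℂ) * gp q)
          - Complex.exp (((|x| : ℝ) : ℂ) * (q : ℂ) * gm q)‖
        ≤ Real.exp X * (2 * (|x| * C1 * q^α) * Real.exp L) := by
      have he : Complex.exp (((|x| : ℝ) : ℂ) * (q : ℂ) * gp q)
          - Complex.exp (((|x| : ℝ) : ℂ) * (q : ℂ) * gm q)
          = Complex.exp (((|x| : ℝ) : ℂ) * (q : ℂ) * gm q)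
            * (Complex.exp ((((|x| : ℝ) : ℂ) * (q : ℂ) * gp q)
                - (((|x| : ℝ) : ℂ) * (q : ℂ) * gm q)) - 1) := by
        rw [mul_sub, mul_one, ← Complex.exp_add]
        rw [show (((|x| : ℝ) : ℂ) * (q : ℂ) * gm q) + ((((|x| : ℝ) : ℂ) * (q : ℂ) * gp q)
            - (((|x| : ℝ) : ℂ) * (q : ℂ) * gm q)) = (((|x| : ℝ) : ℂ) * (q : ℂ) * gp q) by ring]
      rw [he, norm_mul]
      have h1 := aux_exp_sub_one ((((|x| : ℝ) : ℂ) * (q : ℂ) * gp q)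
        - (((|x| : ℝ) : ℂ) * (q : ℂ) * gm q))
      have hb0 : (0:ℝ) ≤ 2 * (|x| * C1 * q^α) :=
        mul_nonneg (by norm_num) (mul_nonneg (mul_nonneg (abs_nonneg x) hC1nn) hrα0)
      have h2 : 2 * ‖(((|x| : ℝ) : ℂ) * (q : ℂ) * gp q)
            - (((|x| : ℝ) : ℂ) * (q : ℂ) * gm q)‖
            * Real.exp (‖(((|x| : ℝ) : ℂ) * (q : ℂ) * gp q)
              - (((|x| : ℝ) : ℂ) * (q : ℂ) * gm q)‖)
          ≤ 2 * (|x| * C1 * q^α) * Real.exp L :=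
        mul_le_mul (by linarith) (Real.exp_le_exp.mpr habd2) (Real.exp_pos _).le hb0
      exact mul_le_mul hexpb (h1.trans h2) (norm_nonneg _) (Real.exp_pos _).le
    have hnum : ‖gp q * Complex.exp (((|x| : ℝ) : ℂ) * (q : ℂ) * gp q)
        - gm q * Complex.exp (((|x| : ℝ) : ℂ) * (q : ℂ) * gm q)‖ ≤ C2 * q^α := by
      rw [show gp q * Complex.exp (((|x| : ℝ) : ℂ) * (q : ℂ) * gp q)
          - gm q * Complex.exp (((|x| : ℝ) : ℂ) * (q : ℂ) * gm q)
          = (gp q - gm q) * Complex.exp (((|x| : ℝ) : ℂ) * (q : ℂ) * gp q)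
            + gm q * (Complex.exp (((|x| : ℝ) : ℂ) * (q : ℂ) * gp q)
              - Complex.exp (((|x| : ℝ) : ℂ) * (q : ℂ) * gm q)) by ring]
      calc ‖_‖
          ≤ ‖(gp q - gm q) * Complex.exp (((|x| : ℝ) : ℂ) * (q : ℂ) * gp q)‖
            + ‖gm q * (Complex.exp (((|x| : ℝ) : ℂ) * (q : ℂ) * gp q)
              - Complex.exp (((|x| : ℝ) : ℂ) * (q : ℂ) * gm q))‖ := norm_add_le _ _
      _ = ‖gp q - gm q‖ * ‖Complex.exp (((|x| : ℝ) : ℂ) * (q : ℂ) * gp q)‖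
            + ‖gm q‖ * ‖Complex.exp (((|x| : ℝ) : ℂ) * (q : ℂ) * gp q)
              - Complex.exp (((|x| : ℝ) : ℂ) * (q : ℂ) * gm q)‖ := by
            rw [norm_mul, norm_mul]
      _ ≤ (C1 * q^α) * Real.exp X
            + M * (Real.exp X * (2 * (|x| * C1 * q^α) * Real.exp L)) := by
            apply add_le_add
            · exact mul_le_mul hd hexpa (norm_nonneg _)
                (mul_nonneg hC1nn hrα0)
            · exact mul_le_mul habsMv hediff (norm_nonneg _) hM0
      _ = C2 * q^α := by rw [hC2def]; ring
    have hFq : ‖F q‖ = ‖gp q * Complex.exp (((|x| : ℝ) : ℂ) * (q : ℂ) * gp q)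
        - gm q * Complex.exp (((|x| : ℝ) : ℂ) * (q : ℂ) * gm q)‖ * Real.exp (-(q*t)) / q := by
      rw [hFdef]
      simp only
      rw [norm_div, norm_mul, habs_expt q, Complex.norm_real, Real.norm_eq_abs,
        abs_of_pos hq0]
    rw [hFq]
    have hle1 : Real.exp (-(q*t)) ≤ 1 := Real.exp_le_one_iff.mpr (by nlinarith)
    have hC2q : (0:ℝ) ≤ C2 * q^α := le_trans (norm_nonneg _) hnum
    calc ‖gp q * Complex.exp (((|x| : ℝ) : ℂ) * (q : ℂ) * gp q)
        - gm q * Complex.exp (((|x| : ℝ) : ℂ) * (q : ℂ) * gm q)‖ * Real.exp (-(q*t)) / q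
        ≤ (C2 * q^α) * 1 / q := by
          apply (div_le_div_iff_of_pos_right hq0).mpr
          exact mul_le_mul hnum hle1 (Real.exp_pos _).le hC2q
    _ = C2 * q^(α-1) := by
        rw [Real.rpow_sub hq0, Real.rpow_one]; ring
  -- the bound at infinity
  have bound2 : ∀ q ∈ Set.Ioi (1:ℝ), ‖F q‖ ≤ (2*M*Real.exp B) * Real.exp (-(δ/2)*q) := by
    intro q hq1m
    have hq1 : 1 < q := hq1m
    have hq0 : (0:ℝ) < q := lt_trans one_pos hq1
    obtain ⟨hD, hDm, hWimlt, hWmim, hconj, habsM, habstail, hdiff⟩ := pack q hq0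
    have habsMv : ‖gm q‖ ≤ M := by rw [hconj, Complex.norm_conj]; exact habsM
    have habstailv : ‖gm q‖ ≤ Real.sqrt τ + K0 * q^(-(α/2)) := by
      rw [hconj, Complex.norm_conj]; exact habstail
    have hexpkey : ∀ u : ℂ, ‖u‖ ≤ Real.sqrt τ + K0 * q^(-(α/2)) →
        Real.exp ((((|x| : ℝ) : ℂ) * (q : ℂ) * u).re) * Real.exp (-(q*t))
          ≤ Real.exp B * Real.exp (-(δ/2)*q) := by
      intro u hu
      rw [← Real.exp_add, ← Real.exp_add]
      apply Real.exp_le_exp.mpr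
      have h1 : (((|x| : ℝ) : ℂ) * (q : ℂ) * u).re
          ≤ |x| * q * (Real.sqrt τ + K0 * q^(-(α/2))) := by
        calc _ ≤ |x| * q * ‖u‖ := hare q u hq0.le
        _ ≤ _ := mul_le_mul_of_nonneg_left hu (by positivity)
      have h2 : q * q^(-(α/2)) = q^(1-α/2) := by
        rw [show q * q^(-(α/2)) = q^(1:ℝ) * q^(-(α/2)) by rw [Real.rpow_one],
          ← Real.rpow_add hq0]
        congr 1
      have h3 : |x| * q * (Real.sqrt τ + K0 * q^(-(α/2))) - q * t
          = -δ*q + K*(q * q^(-(α/2))) := by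
        rw [hδdef, hKdef]; ring
      have h4 := aux_exponent α δ K hα0 hα1 hδ0 hK0 q hq1.le
      rw [h2] at h3
      calc (((|x| : ℝ) : ℂ) * (q : ℂ) * u).re + -(q*t)
          ≤ |x| * q * (Real.sqrt τ + K0 * q^(-(α/2))) - q*t := by linarith
      _ = -δ*q + K*q^(1-α/2) := h3
      _ ≤ -(δ/2)*q + B := by rw [hBdef]; exact h4
      _ = B + -(δ/2)*q := by ring
    have hFq : ‖F q‖ = ‖gp q * Complex.exp (((|x| : ℝ) : ℂ) * (q : ℂ) * gp q)
        - gm q * Complex.exp (((|x| : ℝ) : ℂ) * (q : ℂ) * gm q)‖ * Real.exp (-(q*t)) / q := by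
      rw [hFdef]
      simp only
      rw [norm_div, norm_mul, habs_expt q, Complex.norm_real, Real.norm_eq_abs,
        abs_of_pos hq0]
    rw [hFq]
    have t1 : ‖gp q * Complex.exp (((|x| : ℝ) : ℂ) * (q : ℂ) * gp q)
        - gm q * Complex.exp (((|x| : ℝ) : ℂ) * (q : ℂ) * gm q)‖
        ≤ M * Real.exp ((((|x| : ℝ) : ℂ) * (q : ℂ) * gp q).re)
          + M * Real.exp ((((|x| : ℝ) : ℂ) * (q : ℂ) * gm q).re) := by
      calc ‖_‖
          ≤ ‖gp q * Complex.exp (((|x| : ℝ) : ℂ) * (q : ℂ) * gp q)‖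
            + ‖gm q * Complex.exp (((|x| : ℝ) : ℂ) * (q : ℂ) * gm q)‖ :=
            aux_abs_sub _ _
      _ = ‖gp q‖ * Real.exp ((((|x| : ℝ) : ℂ) * (q : ℂ) * gp q).re)
            + ‖gm q‖ * Real.exp ((((|x| : ℝ) : ℂ) * (q : ℂ) * gm q).re) := by
            rw [norm_mul, norm_mul, Complex.norm_exp, Complex.norm_exp]
      _ ≤ _ := add_le_add (mul_le_mul_of_nonneg_right habsM (Real.exp_pos _).le)
            (mul_le_mul_of_nonneg_right habsMv (Real.exp_pos _).le)
    have t2 := hexpkey (gp q) habstail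
    have t3 := hexpkey (gm q) habstailv
    have t4 : ‖gp q * Complex.exp (((|x| : ℝ) : ℂ) * (q : ℂ) * gp q)
        - gm q * Complex.exp (((|x| : ℝ) : ℂ) * (q : ℂ) * gm q)‖ * Real.exp (-(q*t))
        ≤ (2*M*Real.exp B) * Real.exp (-(δ/2)*q) := by
      calc ‖gp q * Complex.exp (((|x| : ℝ) : ℂ) * (q : ℂ) * gp q)
          - gm q * Complex.exp (((|x| : ℝ) : ℂ) * (q : ℂ) * gm q)‖ * Real.exp (-(q*t))
          ≤ (M * Real.exp ((((|x| : ℝ) : ℂ) * (q : ℂ) * gp q).re)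
            + M * Real.exp ((((|x| : ℝ) : ℂ) * (q : ℂ) * gm q).re)) * Real.exp (-(q*t)) :=
            mul_le_mul_of_nonneg_right t1 (Real.exp_pos _).le
      _ = M * (Real.exp ((((|x| : ℝ) : ℂ) * (q : ℂ) * gp q).re) * Real.exp (-(q*t)))
            + M * (Real.exp ((((|x| : ℝ) : ℂ) * (q : ℂ) * gm q).re) * Real.exp (-(q*t))) := by
            ring
      _ ≤ M * (Real.exp B * Real.exp (-(δ/2)*q)) + M * (Real.exp B * Real.exp (-(δ/2)*q)) :=
            add_le_add (mul_le_mul_of_nonneg_left t2 hM0) (mul_le_mul_of_nonneg_left t3 hM0)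
      _ = (2*M*Real.exp B) * Real.exp (-(δ/2)*q) := by ring
    calc ‖gp q * Complex.exp (((|x| : ℝ) : ℂ) * (q : ℂ) * gp q)
        - gm q * Complex.exp (((|x| : ℝ) : ℂ) * (q : ℂ) * gm q)‖ * Real.exp (-(q*t)) / q
        ≤ ‖gp q * Complex.exp (((|x| : ℝ) : ℂ) * (q : ℂ) * gp q)
          - gm q * Complex.exp (((|x| : ℝ) : ℂ) * (q : ℂ) * gm q)‖ * Real.exp (-(q*t)) :=
          div_le_self (mul_nonneg (norm_nonneg _) (Real.exp_pos _).le) hq1.le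
    _ ≤ _ := t4
  -- continuity / measurability
  have hcont : ContinuousOn F (Set.Ioi (0:ℝ)) := by
    rw [hFdef]
    simp only [hgp, hgm]
    have hcr : ContinuousOn (fun q : ℝ => ((q^α : ℝ) : ℂ)) (Set.Ioi 0) := by
      apply Complex.continuous_ofReal.comp_continuousOn
      intro q hq
      exact (Real.continuousAt_rpow_const q α (Or.inl (ne_of_gt hq))).continuousWithinAt
    have hcD : ContinuousOn (fun q : ℝ => 1 + ((q^α : ℝ):ℂ) * E) (Set.Ioi 0) :=
      continuousOn_const.add (hcr.mul continuousOn_const)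
    have hcDm : ContinuousOn (fun q : ℝ => 1 + ((q^α : ℝ):ℂ) * Em) (Set.Ioi 0) :=
      continuousOn_const.add (hcr.mul continuousOn_const)
    have hcN : ContinuousOn (fun q : ℝ => 1 + (τ:ℂ) * ((q^α : ℝ):ℂ) * E) (Set.Ioi 0) :=
      continuousOn_const.add ((continuousOn_const.mul hcr).mul continuousOn_const)
    have hcNm : ContinuousOn (fun q : ℝ => 1 + (τ:ℂ) * ((q^α : ℝ):ℂ) * Em) (Set.Ioi 0) :=
      continuousOn_const.add ((continuousOn_const.mul hcr).mul continuousOn_const)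
    have hcW : ContinuousOn (fun q : ℝ =>
        (1 + (τ:ℂ) * ((q^α : ℝ):ℂ) * E) / (1 + ((q^α : ℝ):ℂ) * E)) (Set.Ioi 0) :=
      hcN.div hcD (fun q hq => (pack q hq).1)
    have hcWm : ContinuousOn (fun q : ℝ =>
        (1 + (τ:ℂ) * ((q^α : ℝ):ℂ) * Em) / (1 + ((q^α : ℝ):ℂ) * Em)) (Set.Ioi 0) :=
      hcNm.div hcDm (fun q hq => (pack q hq).2.1)
    have hcgp : ContinuousOn (fun q : ℝ =>
        ((1 + (τ:ℂ) * ((q^α : ℝ):ℂ) * E) / (1 + ((q^α : ℝ):ℂ) * E)) ^ (1/2:ℂ))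
        (Set.Ioi 0) := by
      intro q hq
      exact ContinuousAt.comp_continuousWithinAt
        (g := fun z : ℂ => z ^ (1/2:ℂ))
        (f := fun q : ℝ => (1 + (τ:ℂ) * ((q^α : ℝ):ℂ) * E) / (1 + ((q^α : ℝ):ℂ) * E))
        (continuousAt_cpow_const
          (Complex.mem_slitPlane_iff.mpr (Or.inr (ne_of_lt (pack q hq).2.2.1))))
        (hcW q hq)
    have hcgm : ContinuousOn (fun q : ℝ =>
        ((1 + (τ:ℂ) * ((q^α : ℝ):ℂ) * Em) / (1 + ((q^α : ℝ):ℂ) * Em)) ^ (1/2:ℂ))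
        (Set.Ioi 0) := by
      intro q hq
      exact ContinuousAt.comp_continuousWithinAt
        (g := fun z : ℂ => z ^ (1/2:ℂ))
        (f := fun q : ℝ => (1 + (τ:ℂ) * ((q^α : ℝ):ℂ) * Em) / (1 + ((q^α : ℝ):ℂ) * Em))
        (continuousAt_cpow_const
          (Complex.mem_slitPlane_iff.mpr (Or.inr (ne_of_gt (pack q hq).2.2.2.1))))
        (hcWm q hq)
    have hcq : ContinuousOn (fun q : ℝ => (q : ℂ)) (Set.Ioi 0) :=
      Complex.continuous_ofReal.continuousOn
    apply ContinuousOn.div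
    · apply ContinuousOn.mul
      · apply ContinuousOn.sub
        · exact hcgp.mul (Complex.continuous_exp.comp_continuousOn
            ((continuousOn_const.mul hcq).mul hcgp))
        · exact hcgm.mul (Complex.continuous_exp.comp_continuousOn
            ((continuousOn_const.mul hcq).mul hcgm))
      · exact (Complex.continuous_exp.comp
          ((Complex.continuous_ofReal.neg).mul continuous_const)).continuousOn
    · exact hcq
    · intro q hq
      exact Complex.ofReal_ne_zero.mpr (ne_of_gt hq)
  -- glue
  have hsplit : Set.Ioi (0:ℝ) = Set.Ioc 0 1 ∪ Set.Ioi 1 :=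
    (Set.Ioc_union_Ioi_eq_Ioi zero_le_one).symm
  rw [hsplit]
  refine IntegrableOn.union ?_ ?_
  · refine Integrable.mono' (g := fun q : ℝ => C2 * q^(α-1)) ?_ ?_ ?_
    · exact ((intervalIntegrable_iff_integrableOn_Ioc_of_le zero_le_one).mp
        (intervalIntegral.intervalIntegrable_rpow' (by linarith))).const_mul C2
    · exact (hcont.mono (Set.Ioc_subset_Ioi_self)).aestronglyMeasurable measurableSet_Ioc
    · rw [ae_restrict_iff' measurableSet_Ioc]
      exact ae_of_all _ bound1
  · refine Integrable.mono' (g := fun q : ℝ => (2*M*Real.exp B) * Real.exp (-(δ/2)*q)) ?_ ?_ ?_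
    · exact (exp_neg_integrableOn_Ioi 1 (by positivity)).const_mul _
    · exact (hcont.mono (Set.Ioi_subset_Ioi zero_le_one)).aestronglyMeasurable measurableSet_Ioi
    · rw [ae_restrict_iff' measurableSet_Ioi]
      exact ae_of_all _ bound2
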